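/- For a genus g hyperelliptic Lefschetz fibration, the signature satisfies σ = −((8 − λ)/(12 − λ))·(n + s), where λ is the slope. -/

import Mathlib

/-- For a genus `g` hyperelliptic Lefschetz fibration the
signature satisfies `σ = -((8 - λ)/(12 - λ))·(n + s)`, where `λ` is the slope. -/
theorem signature_in_terms_of_slope
    (g n : ℕ) (hg : 2 ≤ g) (hn : 0 < n)
    (sh : ℕ → ℕ)
    (s x σ χ χh c₁sq lam : ℚ)
    (hs : s = ∑ h ∈ Finset.Icc 1 (g / 2), (sh h : ℚ))
    (hx : x = ∑ h ∈ Finset.Icc 1 (g / 2), (h : ℚ) * ((g : ℚ) - (h : ℚ)) * (sh h : ℚ))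
    (hσ : σ = -(((g : ℚ) + 1) / (2 * (g : ℚ) + 1)) * (n : ℚ)
            + 4 * x / (2 * (g : ℚ) + 1) - s)
    (hχ : χ = (n : ℚ) + s - 4 * ((g : ℚ) - 1))
    (hχh : χh = (σ + χ) / 4)
    (hc : c₁sq = 2 * χ + 3 * σ)
    (hlam : lam = (c₁sq + 8 * ((g : ℚ) - 1)) / (χh + (g : ℚ) - 1)) :
    σ = -((8 - lam) / (12 - lam)) * ((n : ℚ) + s) := by
  have hg1 : (1:ℚ) ≤ (g:ℚ) := by exact_mod_cast Nat.one_le_of_lt hg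
  have hn1 : (1:ℚ) ≤ (n:ℚ) := by exact_mod_cast hn
  have hden : (0:ℚ) < 2 * (g:ℚ) + 1 := by linarith
  have hs0 : (0:ℚ) ≤ s := by rw [hs]; positivity
  have hx0 : (0:ℚ) ≤ x := by
    rw [hx]
    apply Finset.sum_nonneg
    intro h hh
    simp only [Finset.mem_Icc] at hh
    have h1 : (h:ℚ) ≤ (g:ℚ) := by
      exact_mod_cast le_trans hh.2 (Nat.div_le_self g 2)
    have h2 : (0:ℚ) ≤ (h:ℚ) := by positivity
    have h3 : (0:ℚ) ≤ (sh h : ℚ) := by positivity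
    exact mul_nonneg (mul_nonneg h2 (by linarith)) h3
  have hD : σ + ((n:ℚ) + s) = ((n:ℚ) * (g:ℚ) + 4 * x) / (2 * (g:ℚ) + 1) := by
    rw [hσ]; field_simp; ring
  have hDpos : (0:ℚ) < σ + ((n:ℚ) + s) := by
    rw [hD]; apply div_pos _ hden; nlinarith
  have hDne : σ + ((n:ℚ) + s) ≠ 0 := ne_of_gt hDpos
  have hNpos : (0:ℚ) < (n:ℚ) + s := by linarith
  have hNne : ((n:ℚ) + s) ≠ 0 := ne_of_gt hNpos
  have hE : χh + (g:ℚ) - 1 = (σ + ((n:ℚ) + s)) / 4 := by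
    rw [hχh, hχ]; ring
  have hlamv : lam = (3 * σ + 2 * ((n:ℚ) + s)) / ((σ + ((n:ℚ) + s)) / 4) := by
    rw [hlam, hE, hc, hχ]; congr 1; ring
  have h8 : 8 - lam = -4 * σ / (σ + ((n:ℚ) + s)) := by
    rw [hlamv]; field_simp; ring
  have h12 : 12 - lam = 4 * ((n:ℚ) + s) / (σ + ((n:ℚ) + s)) := by
    rw [hlamv]; field_simp; ring
  rw [h8, h12]
  field_simp
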